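/- Call a finite sequence $(x_1, \dots, x_n)$ of real numbers alternating (down-up) if $x_j \le x_{j-1}$ for even $j$ and $x_j \ge x_{j-1}$ for odd $j > 1$. For $\alpha \le \beta$, the set $\mathcal{P}_n^{[\alpha,\beta]}$ of alternating sequences in $[\alpha,\beta]^n$ has Lebesgue measure (volume) equal to $\frac{A_n}{n!}(\beta - \alpha)^n$, where $A_n$ is the number of down-up alternating permutations of $\{1, \dots, n\}$ (the $n$th Euler zigzag number). -/

import Mathlib

/-- A permutation of `Fin n` is down-up alternating if `σ 0 > σ 1 < σ 2 > ⋯`. -/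
def DownUp (n : ℕ) (σ : Equiv.Perm (Fin n)) : Prop :=
  ∀ i : Fin n, ∀ h : (i : ℕ) + 1 < n,
    if (i : ℕ) % 2 = 0 then σ ⟨(i : ℕ) + 1, h⟩ < σ i else σ i < σ ⟨(i : ℕ) + 1, h⟩

open Classical in
/-- The `n`th Euler zigzag number: the number of down-up alternating permutations
of `{1, …, n}`. -/
noncomputable def zigzag (n : ℕ) : ℕ :=
  (Finset.univ.filter (DownUp n)).card

/-- A finite sequence `x : Fin n → ℝ` (thought of as `x₁, …, xₙ`, 1-indexed) is
alternating (down-up) if `x_j ≤ x_{j-1}` for even `j` and `x_j ≥ x_{j-1}` for odd `j > 1`.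
In the 0-indexed encoding, position `i` corresponds to `j = i + 1`. -/
def IsAltSeq {n : ℕ} (x : Fin n → ℝ) : Prop :=
  ∀ i : Fin n, 0 < (i : ℕ) →
    if (i : ℕ) % 2 = 1 then
      x i ≤ x ⟨(i : ℕ) - 1, lt_of_le_of_lt (Nat.sub_le _ _) i.isLt⟩
    else
      x ⟨(i : ℕ) - 1, lt_of_le_of_lt (Nat.sub_le _ _) i.isLt⟩ ≤ x i

/-- The gap map: `f₁ = x₁`, `f_i = x_{i-1} - x_i` for even `i`, `f_i = x_i - x_{i-1}`
for odd `i > 1` (1-indexed; position `i : Fin n` corresponds to index `i + 1`). -/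
def gapMap (n : ℕ) (x : Fin n → ℝ) : Fin n → ℝ := fun i =>
  if (i : ℕ) = 0 then x i
  else if (i : ℕ) % 2 = 1 then
    x ⟨(i : ℕ) - 1, lt_of_le_of_lt (Nat.sub_le _ _) i.isLt⟩ - x i
  else
    x i - x ⟨(i : ℕ) - 1, lt_of_le_of_lt (Nat.sub_le _ _) i.isLt⟩

namespace AltVolAux

open MeasureTheory Set ENNReal

variable {n : ℕ}


-- non-injective set is null
private lemma vol_noninj (n : ℕ) :
    volume {x : Fin n → ℝ | ¬ Function.Injective x} = 0 := by
  have h1 : {x : Fin n → ℝ | ¬ Function.Injective x}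
      ⊆ ⋃ (i : Fin n), ⋃ (j : Fin n), ⋃ (_ : i ≠ j), {x | x i = x j} := by
    intro x hx
    simp only [Function.Injective, not_forall] at hx
    obtain ⟨a, b, hab, hne⟩ := hx
    exact Set.mem_iUnion.2 ⟨a, Set.mem_iUnion.2 ⟨b, Set.mem_iUnion.2 ⟨hne, hab⟩⟩⟩
  refine measure_mono_null h1 ?_
  refine measure_iUnion_null fun i => measure_iUnion_null fun j => measure_iUnion_null fun hij => ?_
  have hset : {x : Fin n → ℝ | x i = x j}
      = ↑(LinearMap.ker ((LinearMap.proj i : (Fin n → ℝ) →ₗ[ℝ] ℝ) - LinearMap.proj j)) := by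
    ext x
    simp [LinearMap.mem_ker, sub_eq_zero]
  rw [hset]
  refine Measure.addHaar_submodule _ _ ?_
  intro htop
  have h1 : (Pi.single i 1 : Fin n → ℝ) ∈ LinearMap.ker
      ((LinearMap.proj i : (Fin n → ℝ) →ₗ[ℝ] ℝ) - LinearMap.proj j) := by
    rw [htop]; trivial
  simp [LinearMap.mem_ker, Pi.single_apply, hij.symm] at h1


private lemma vol_comp_perm (σ : Equiv.Perm (Fin n)) (s : Set (Fin n → ℝ)) (hs : MeasurableSet s) :
    volume {x : Fin n → ℝ | x ∘ σ ∈ s} = volume s := by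
  have he := volume_measurePreserving_piCongrLeft (fun _ : Fin n => ℝ) (σ.symm : Fin n ≃ Fin n)
  have hco : ∀ x : Fin n → ℝ,
      (MeasurableEquiv.piCongrLeft (fun _ : Fin n => ℝ) (σ.symm : Fin n ≃ Fin n)) x = x ∘ σ := by
    intro x
    funext b
    have h2 := Equiv.piCongrLeft_apply_apply (fun _ : Fin n => ℝ) (σ.symm : Fin n ≃ Fin n) x (σ b)
    rw [show (MeasurableEquiv.piCongrLeft (fun _ : Fin n => ℝ) (σ.symm : Fin n ≃ Fin n)) x
        = (Equiv.piCongrLeft (fun _ : Fin n => ℝ) (σ.symm : Fin n ≃ Fin n)) x from rfl]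
    simp only [Equiv.symm_symm, Equiv.symm_apply_apply] at h2 ⊢; exact h2
  have : {x : Fin n → ℝ | x ∘ σ ∈ s}
      = (MeasurableEquiv.piCongrLeft (fun _ : Fin n => ℝ) (σ.symm : Fin n ≃ Fin n)) ⁻¹' s := by
    ext x; simp [hco x]
  rw [this, he.measure_preimage hs.nullMeasurableSet]

private lemma meas_box (α β : ℝ) : MeasurableSet {x : Fin n → ℝ | ∀ i, x i ∈ Set.Icc α β} := by
  have : {x : Fin n → ℝ | ∀ i, x i ∈ Set.Icc α β} = Set.pi Set.univ (fun _ => Set.Icc α β) := by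
    ext x; simp only [Set.mem_setOf_eq, Set.mem_univ_pi]
  rw [this]
  exact MeasurableSet.univ_pi fun i => measurableSet_Icc

private lemma meas_sm : MeasurableSet {x : Fin n → ℝ | StrictMono x} := by
  have : {x : Fin n → ℝ | StrictMono x}
      = ⋂ (a : Fin n), ⋂ (b : Fin n), ⋂ (_ : a < b), {x | x a < x b} := by
    ext x; simp only [Set.mem_iInter, Set.mem_setOf_eq]; rfl
  rw [this]
  exact MeasurableSet.iInter fun a => MeasurableSet.iInter fun b => MeasurableSet.iInter fun _ =>
    measurableSet_lt (measurable_pi_apply a) (measurable_pi_apply b)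

private lemma vol_box (α β : ℝ) (hab : α ≤ β) :
    volume {x : Fin n → ℝ | ∀ i, x i ∈ Set.Icc α β} = ENNReal.ofReal ((β - α) ^ n) := by
  have : {x : Fin n → ℝ | ∀ i, x i ∈ Set.Icc α β} = Set.pi Set.univ (fun _ => Set.Icc α β) := by
    ext x; simp only [Set.mem_setOf_eq, Set.mem_univ_pi]
  rw [this, volume_pi_pi]
  simp [Real.volume_Icc, ENNReal.ofReal_pow (sub_nonneg.2 hab)]


private lemma inj_of_sm {x : Fin n → ℝ} {σ : Equiv.Perm (Fin n)} (h : StrictMono (x ∘ σ)) :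
    Function.Injective x := by
  have : x = (x ∘ σ) ∘ σ.symm := by funext i; simp
  rw [this]
  exact h.injective.comp σ.symm.injective

private lemma lt_iff_of_sm {x : Fin n → ℝ} {σ : Equiv.Perm (Fin n)} (h : StrictMono (x ∘ σ))
    (a b : Fin n) : x a < x b ↔ σ⁻¹ a < σ⁻¹ b := by
  have := h.lt_iff_lt (a := σ⁻¹ a) (b := σ⁻¹ b)
  simpa using this

private lemma alt_iff_downup {x : Fin n → ℝ} {σ : Equiv.Perm (Fin n)} (h : StrictMono (x ∘ σ)) :
    IsAltSeq x ↔ DownUp n σ⁻¹ := by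
  have hinj := inj_of_sm h
  constructor
  · intro ha i hi
    set j : Fin n := ⟨(i : ℕ) + 1, hi⟩ with hj
    have hji : (j : ℕ) = (i : ℕ) + 1 := rfl
    have h0 : 0 < (j : ℕ) := Nat.succ_pos _
    have hprev : (⟨(j : ℕ) - 1, lt_of_le_of_lt (Nat.sub_le _ _) j.isLt⟩ : Fin n) = i := by
      apply Fin.ext; simp [hji]
    have := ha j h0
    by_cases he : (i : ℕ) % 2 = 0
    · have hjodd : (j : ℕ) % 2 = 1 := by omega
      rw [if_pos hjodd, hprev] at this
      have hlt : x j < x i := lt_of_le_of_ne this (fun hxe => by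
        have := hinj hxe
        apply absurd (congrArg Fin.val this); simp [hji])
      rw [if_pos he]
      exact (lt_iff_of_sm h j i).1 hlt
    · have hjodd : ¬ (j : ℕ) % 2 = 1 := by omega
      rw [if_neg hjodd, hprev] at this
      have hlt : x i < x j := lt_of_le_of_ne this (fun hxe => by
        have := hinj hxe
        apply absurd (congrArg Fin.val this); simp [hji])
      rw [if_neg he]
      exact (lt_iff_of_sm h i j).1 hlt
  · intro hd j hj
    set i : Fin n := ⟨(j : ℕ) - 1, lt_of_le_of_lt (Nat.sub_le _ _) j.isLt⟩ with hi
    have hij : (i : ℕ) + 1 = (j : ℕ) := by simp [hi]; omega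
    have hlt : (i : ℕ) + 1 < n := by rw [hij]; exact j.isLt
    have hjeq : (⟨(i : ℕ) + 1, hlt⟩ : Fin n) = j := Fin.ext hij
    have := hd i hlt
    rw [hjeq] at this
    by_cases he : (j : ℕ) % 2 = 1
    · have hie : (i : ℕ) % 2 = 0 := by omega
      rw [if_pos hie] at this
      rw [if_pos he]
      exact le_of_lt ((lt_iff_of_sm h j i).2 this)
    · have hie : ¬ (i : ℕ) % 2 = 0 := by omega
      rw [if_neg hie] at this
      rw [if_neg he]
      exact le_of_lt ((lt_iff_of_sm h i j).2 this)

private lemma sm_unique {x : Fin n → ℝ} {σ τ : Equiv.Perm (Fin n)}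
    (hσ : StrictMono (x ∘ σ)) (hτ : StrictMono (x ∘ τ)) : σ = τ := by
  have hr : Set.range (x ∘ σ) = Set.range (x ∘ τ) := by
    rw [Set.range_comp, Set.range_comp, σ.range_eq_univ, τ.range_eq_univ]
  have inst : WellFoundedLT (Fin n) := inferInstance
  have heq : x ∘ σ = x ∘ τ := (@StrictMono.range_inj (Fin n) ℝ _ _ inst _ _ hσ hτ).1 hr
  exact Equiv.ext fun i => inj_of_sm hσ (congrFun heq i)

private lemma exists_sm {x : Fin n → ℝ} (hx : Function.Injective x) :
    ∃ σ : Equiv.Perm (Fin n), StrictMono (x ∘ σ) :=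
  ⟨Tuple.sort x, (Tuple.monotone_sort x).strictMono_of_injective
    (hx.comp (Tuple.sort x).injective)⟩

open Classical in
private lemma card_filter_inv :
    (Finset.univ.filter (fun σ : Equiv.Perm (Fin n) => DownUp n σ⁻¹)).card
      = zigzag n := by
  rw [zigzag]
  apply Finset.card_nbij' (i := fun σ => σ⁻¹) (j := fun σ => σ⁻¹) <;>
    simp [Finset.mem_filter, Set.MapsTo, Set.LeftInvOn, Set.RightInvOn, Set.EqOn]

end AltVolAux

open MeasureTheory Set ENNReal AltVolAux in
/-- The volume of the set of alternating sequences in `[α,β]^n` is `(A_n/n!) (β-α)^n`,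
where `A_n` is the `n`th Euler zigzag number. -/
theorem volume_alternating_sequences (n : ℕ) (α β : ℝ) (hab : α ≤ β) :
    MeasureTheory.volume
      {x : Fin n → ℝ | (∀ i, x i ∈ Set.Icc α β) ∧ IsAltSeq x}
      = ENNReal.ofReal ((zigzag n : ℝ) / (Nat.factorial n) * (β - α) ^ n) := by

  classical
  set Box : Set (Fin n → ℝ) := {x | ∀ i, x i ∈ Set.Icc α β} with hBoxdef
  set B : Equiv.Perm (Fin n) → Set (Fin n → ℝ) :=
    fun σ => Box ∩ {x | StrictMono (x ∘ σ)} with hBdef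
  set V : ℝ≥0∞ := volume (Box ∩ {x : Fin n → ℝ | StrictMono x}) with hVdef
  set N : Set (Fin n → ℝ) := {x | ¬ Function.Injective x} with hNdef
  -- measurability of B σ
  have hmeasB : ∀ σ, MeasurableSet (B σ) := by
    intro σ
    refine (meas_box α β).inter ?_
    have : {x : Fin n → ℝ | StrictMono (x ∘ σ)}
        = (fun x : Fin n → ℝ => x ∘ σ) ⁻¹' {x | StrictMono x} := rfl
    rw [this]
    exact meas_sm.preimage (measurable_pi_lambda _ fun i => measurable_pi_apply (σ i))
  -- each B σ has volume V
  have hvolB : ∀ σ, volume (B σ) = V := by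
    intro σ
    have hset : B σ = {x : Fin n → ℝ | x ∘ σ ∈ Box ∩ {x | StrictMono x}} := by
      ext x
      simp only [hBdef, hBoxdef, Set.mem_inter_iff, Set.mem_setOf_eq]
      constructor
      · rintro ⟨hb, hm⟩; exact ⟨fun i => hb (σ i), hm⟩
      · rintro ⟨hb, hm⟩; exact ⟨fun i => by simpa using hb (σ.symm i), hm⟩
    rw [hset, vol_comp_perm σ _ ((meas_box α β).inter meas_sm)]
  -- disjointness
  have hdisj : ∀ σ τ : Equiv.Perm (Fin n), σ ≠ τ → Disjoint (B σ) (B τ) := by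
    intro σ τ hne
    rw [Set.disjoint_left]
    rintro x ⟨-, hσ⟩ ⟨-, hτ⟩
    exact hne (sm_unique hσ hτ)
  -- volume of a finite union
  have hunion : ∀ s : Finset (Equiv.Perm (Fin n)),
      volume (⋃ σ ∈ s, B σ) = s.card * V := by
    intro s
    rw [measure_biUnion_finset (fun σ _ τ _ hne => hdisj σ τ hne) (fun σ _ => hmeasB σ)]
    simp [hvolB, Finset.sum_const, mul_comm]
  -- volume of Box as n! * V
  have hBox : ((n.factorial : ℝ≥0∞)) * V = ENNReal.ofReal ((β - α) ^ n) := by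
    have hcover : Box ⊆ (⋃ σ ∈ (Finset.univ : Finset (Equiv.Perm (Fin n))), B σ) ∪ N := by
      intro x hx
      by_cases hinj : Function.Injective x
      · obtain ⟨σ, hσ⟩ := exists_sm hinj
        exact Or.inl (Set.mem_biUnion (Finset.mem_univ σ) ⟨hx, hσ⟩)
      · exact Or.inr hinj
    have hsub : (⋃ σ ∈ (Finset.univ : Finset (Equiv.Perm (Fin n))), B σ) ⊆ Box := by
      intro x hx
      obtain ⟨σ, -, hmem⟩ := Set.mem_iUnion₂.1 hx
      exact hmem.1
    have h1 : volume Box ≤ (Finset.univ : Finset (Equiv.Perm (Fin n))).card * V := by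
      calc volume Box ≤ volume ((⋃ σ ∈ (Finset.univ : Finset (Equiv.Perm (Fin n))), B σ) ∪ N) :=
            measure_mono hcover
        _ ≤ volume (⋃ σ ∈ (Finset.univ : Finset (Equiv.Perm (Fin n))), B σ) + volume N :=
            measure_union_le _ _
        _ = (Finset.univ : Finset (Equiv.Perm (Fin n))).card * V := by
            rw [hNdef, vol_noninj, add_zero, hunion]
    have h2 : ((Finset.univ : Finset (Equiv.Perm (Fin n))).card : ℝ≥0∞) * V ≤ volume Box := by
      rw [← hunion]; exact measure_mono hsub
    have hcard : (Finset.univ : Finset (Equiv.Perm (Fin n))).card = n.factorial := by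
      rw [Finset.card_univ, Fintype.card_perm, Fintype.card_fin]
    rw [← vol_box α β hab, hBoxdef] at *
    rw [← hcard]
    exact le_antisymm h2 h1
  -- volume of target
  have hTarget : volume {x : Fin n → ℝ | (∀ i, x i ∈ Set.Icc α β) ∧ IsAltSeq x}
      = (zigzag n : ℝ≥0∞) * V := by
    set F : Finset (Equiv.Perm (Fin n)) :=
      Finset.univ.filter (fun σ => DownUp n σ⁻¹) with hFdef
    have hcover : {x : Fin n → ℝ | (∀ i, x i ∈ Set.Icc α β) ∧ IsAltSeq x}
        ⊆ (⋃ σ ∈ F, B σ) ∪ N := by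
      rintro x ⟨hx, halt⟩
      by_cases hinj : Function.Injective x
      · obtain ⟨σ, hσ⟩ := exists_sm hinj
        have : σ ∈ F := Finset.mem_filter.2 ⟨Finset.mem_univ σ, (alt_iff_downup hσ).1 halt⟩
        exact Or.inl (Set.mem_biUnion this ⟨hx, hσ⟩)
      · exact Or.inr hinj
    have hsub : (⋃ σ ∈ F, B σ) ⊆ {x : Fin n → ℝ | (∀ i, x i ∈ Set.Icc α β) ∧ IsAltSeq x} := by
      intro x hx
      obtain ⟨σ, hσF, hmem⟩ := Set.mem_iUnion₂.1 hx
      have hdu : DownUp n σ⁻¹ := (Finset.mem_filter.1 hσF).2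
      exact ⟨hmem.1, (alt_iff_downup hmem.2).2 hdu⟩
    have h1 : volume {x : Fin n → ℝ | (∀ i, x i ∈ Set.Icc α β) ∧ IsAltSeq x}
        ≤ (F.card : ℝ≥0∞) * V := by
      calc volume {x : Fin n → ℝ | (∀ i, x i ∈ Set.Icc α β) ∧ IsAltSeq x}
          ≤ volume ((⋃ σ ∈ F, B σ) ∪ N) := measure_mono hcover
        _ ≤ volume (⋃ σ ∈ F, B σ) + volume N := measure_union_le _ _
        _ = (F.card : ℝ≥0∞) * V := by rw [hNdef, vol_noninj, add_zero, hunion]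
    have h2 : (F.card : ℝ≥0∞) * V
        ≤ volume {x : Fin n → ℝ | (∀ i, x i ∈ Set.Icc α β) ∧ IsAltSeq x} := by
      rw [← hunion]; exact measure_mono hsub
    have hcard : F.card = zigzag n := card_filter_inv
    rw [← hcard]
    exact le_antisymm h1 h2
  -- final arithmetic
  rw [hTarget]
  have hfac0 : ((n.factorial : ℝ≥0∞)) ≠ 0 := by
    simp [Nat.factorial_ne_zero]
  have hfactop : ((n.factorial : ℝ≥0∞)) ≠ ⊤ := ENNReal.natCast_ne_top _
  have hV : V = ENNReal.ofReal ((β - α) ^ n) / (n.factorial : ℝ≥0∞) :=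
    (ENNReal.eq_div_iff hfac0 hfactop).2 hBox
  rw [hV]
  have hrhs : (zigzag n : ℝ) / (Nat.factorial n) * (β - α) ^ n
      = ((zigzag n : ℝ) * (β - α) ^ n) / (Nat.factorial n) := by ring
  rw [hrhs, ENNReal.ofReal_div_of_pos (by positivity), ENNReal.ofReal_mul (by positivity)]
  rw [ENNReal.ofReal_natCast, ENNReal.ofReal_natCast, mul_div_assoc]
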